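/- If α ∈ 𝓕_m(ℝ²) is a critical point of 𝓗_{ℝ²} (∇𝓗_{ℝ²}(α) = 0), then the kernel of the Hessian contains the subspace sum: ker ∇²𝓗_{ℝ²}(α) ⊇ {(a,…,a) ∈ ℝ^{2m} : a ∈ ℝ²} + ℝ·J_mα + ℝ·α. -/

import Mathlib

noncomputable section

open Real

/-- The plane `ℝ²` with its Euclidean structure. -/
abbrev R2 : Type := EuclideanSpace ℝ (Fin 2)

/-- The standard symplectic matrix `J` (rotation by `-π/2`): `J(x₁,x₂) = (x₂,-x₁)`. -/
def Jrot (x : R2) : R2 := (WithLp.equiv 2 (Fin 2 → ℝ)).symm ![x 1, -(x 0)]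

/-- The rotation `e^{θJ}` of the plane. -/
def rotate (θ : ℝ) (x : R2) : R2 :=
  (WithLp.equiv 2 (Fin 2 → ℝ)).symm
    ![Real.cos θ * x 0 + Real.sin θ * x 1, -Real.sin θ * x 0 + Real.cos θ * x 1]

/-- The generalized Green's function `G(x,y) = -(1/2π) log|x-y| - g(x,y)`. -/
def Gf (g : R2 → R2 → ℝ) (x y : R2) : ℝ := -(1 / (2 * π)) * Real.log ‖x - y‖ - g x y

/-- `z` is a configuration of pairwise distinct points of `Ω`. -/
def Conf {ι : Type*} (Ω : Set R2) (z : ι → R2) : Prop :=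
  (∀ i, z i ∈ Ω) ∧ ∀ i i', i ≠ i' → z i ≠ z i'

/-- The `m`-vortex Hamiltonian `𝓗`. -/
def mHam {m : ℕ} (g : R2 → R2 → ℝ) (Γ : Fin m → ℝ) (a : Fin m → R2) : ℝ :=
  (∑ k, ∑ k', if k ≠ k' then Γ k * Γ k' * Gf g (a k) (a k') else 0)
    - ∑ k, Γ k ^ 2 * g (a k) (a k)

/-- Partial gradient `∇_{zᵢ} f(z) ∈ ℝ²` of a function of several planar variables. -/
def pgrad {ι : Type*} [DecidableEq ι] (f : (ι → R2) → ℝ) (z : ι → R2) (i : ι) : R2 :=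
  gradient (fun p => f (Function.update z i p)) (z i)

/-- `i`-th block of the Hessian of `f` at `z` applied to `w`, `(∇²f(z)w)ᵢ ∈ ℝ²`. -/
def hessVec {ι : Type*} [Fintype ι] [DecidableEq ι] (f : (ι → R2) → ℝ) (z w : ι → R2)
    (i : ι) : R2 :=
  gradient (fun p => fderiv ℝ f (Function.update z i p) w) (z i)

/-- Kernel of the Hessian `∇²f(z)` viewed as a map into the dual space. -/
def hessKer {ι : Type*} [Fintype ι] (f : (ι → R2) → ℝ) (z : ι → R2) :
    Submodule ℝ (ι → R2) :=
  LinearMap.ker (fderiv ℝ (fderiv ℝ f) z : (ι → R2) →ₗ[ℝ] (ι → R2) →L[ℝ] ℝ)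

/-- `z : ℝ → (ι → ℝ²)` solves the vortex system `Γᵢ żᵢ = J ∇_{zᵢ} Ham(z)` on `I`. -/
def IsVortexSol {ι : Type*} [Fintype ι] [DecidableEq ι] (Γv : ι → ℝ)
    (Ham : (ι → R2) → ℝ) (I : Set ℝ) (z : ℝ → ι → R2) : Prop :=
  ∀ t ∈ I, ∀ i, HasDerivAt (fun s => Γv i • z s i) (Jrot (pgrad Ham (z t) i)) t

/-- The whole-plane `n`-vortex Hamiltonian. -/
def planeHam {n : ℕ} (Γk : Fin n → ℝ) (z : Fin n → R2) : ℝ :=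
  -(1 / (2 * π)) * ∑ j, ∑ j', if j ≠ j' then Γk j * Γk j' * Real.log ‖z j - z j'‖ else 0

/-- `Z` is a relative equilibrium `Z(t) = e^{±J t/ordσ} z⁰` of the whole-plane system. -/
def IsRelEq {n : ℕ} (Γk : Fin n → ℝ) (ordσ : ℕ) (Z : ℝ → Fin n → R2) : Prop :=
  (∃ ω : ℝ, (ω = 1 ∨ ω = -1) ∧ ∃ z0 : Fin n → R2,
      (∀ j j', j ≠ j' → z0 j ≠ z0 j') ∧ ∀ t j, Z t j = rotate (ω * t / (ordσ : ℝ)) (z0 j)) ∧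
  IsVortexSol Γk (planeHam Γk) Set.univ Z

/-- `w` solves the linearization `Γⱼẇⱼ = J(∇²H_{ℝ²}(Z(t))w)ⱼ` and is `σ`-symmetric. -/
def IsLinSol {n : ℕ} (Γk : Fin n → ℝ) (σ : Equiv.Perm (Fin n)) (Z : ℝ → Fin n → R2)
    (w : ℝ → Fin n → R2) : Prop :=
  (∀ t j, HasDerivAt (fun s => Γk j • w s j)
      (Jrot (hessVec (planeHam Γk) (Z t) (w t) j)) t) ∧
  ∀ t j, w (t + 2 * π) (σ⁻¹ j) = w t j

/-- `σ`-nondegeneracy of a relative equilibrium: `σ*Z(·+2π) = Z` and the space of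
`σ`-symmetric solutions of the linearized equation is exactly 3-dimensional. -/
def SigmaNondeg {n : ℕ} (Γk : Fin n → ℝ) (σ : Equiv.Perm (Fin n)) (Z : ℝ → Fin n → R2) :
    Prop :=
  (∀ t j, Z (t + 2 * π) (σ⁻¹ j) = Z t j) ∧
  ∃ W : Fin 3 → ℝ → Fin n → R2,
    LinearIndependent ℝ W ∧ (∀ p, IsLinSol Γk σ Z (W p)) ∧
    ∀ w, IsLinSol Γk σ Z w → w ∈ Submodule.span ℝ (Set.range W)

/-- The `N`-vortex Hamiltonian `H` on clustered configurations. -/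
def NHam {m : ℕ} {Nk : Fin m → ℕ} (g : R2 → R2 → ℝ)
    (Γc : (k : Fin m) → Fin (Nk k) → ℝ) (z : ((k : Fin m) × Fin (Nk k)) → R2) : ℝ :=
  (∑ i, ∑ i', if i ≠ i' then Γc i.1 i.2 * Γc i'.1 i'.2 * Gf g (z i) (z i') else 0)
    - ∑ i, Γc i.1 i.2 ^ 2 * g (z i) (z i)

/-- Square of the `H¹_T` distance of two (`C¹`, `T`-periodic) curves. -/
def H1distSq {ι : Type*} [Fintype ι] (T : ℝ) (u v : ℝ → ι → R2) : ℝ :=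
  ∫ t in (0:ℝ)..T,
    ((∑ i, ‖u t i - v t i‖ ^ 2) +
      ∑ i, ‖deriv (fun s => u s i) t - deriv (fun s => v s i) t‖ ^ 2)

/-- The function `F` appearing in the rescaled Hamiltonian. -/
def Ffun {m : ℕ} {Nk : Fin m → ℕ} (g : R2 → R2 → ℝ)
    (Γc : (k : Fin m) → Fin (Nk k) → ℝ) (α : Fin m → R2)
    (z : ((k : Fin m) × Fin (Nk k)) → R2) : ℝ :=
  (∑ i, ∑ i', if i.1 ≠ i'.1 then
      Γc i.1 i.2 * Γc i'.1 i'.2 * Gf g (z i + α i.1) (z i' + α i'.1) else 0)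
    - ∑ k, ∑ j, ∑ j', Γc k j * Γc k j' * g (z ⟨k, j⟩ + α k) (z ⟨k, j'⟩ + α k)

/-- The decoupled limit Hamiltonian `H₀(u) = Σₖ Hᵏ_{ℝ²}(uᵏ)`. -/
def H0 {m : ℕ} {Nk : Fin m → ℕ} (Γc : (k : Fin m) → Fin (Nk k) → ℝ)
    (u : ((k : Fin m) × Fin (Nk k)) → R2) : ℝ :=
  ∑ k, planeHam (Γc k) (fun j => u ⟨k, j⟩)

/-- The rescaled Hamiltonian `H_r(u) = H₀(u) + F(ru) - 𝓗(α)`. -/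
def Hr {m : ℕ} {Nk : Fin m → ℕ} (g : R2 → R2 → ℝ) (Γ : Fin m → ℝ)
    (Γc : (k : Fin m) → Fin (Nk k) → ℝ) (α : Fin m → R2) (r : ℝ)
    (u : ((k : Fin m) × Fin (Nk k)) → R2) : ℝ :=
  H0 Γc u + Ffun g Γc α (r • u) - mHam g Γ α


/-! ### Auxiliary lemmas for Statement 14 -/

section Statement14Aux

@[simp] lemma rotate_apply0 (θ : ℝ) (x : R2) :
    rotate θ x 0 = Real.cos θ * x 0 + Real.sin θ * x 1 := rfl

@[simp] lemma rotate_apply1 (θ : ℝ) (x : R2) :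
    rotate θ x 1 = -Real.sin θ * x 0 + Real.cos θ * x 1 := rfl

@[simp] lemma Jrot_apply0 (x : R2) : Jrot x 0 = x 1 := rfl

@[simp] lemma Jrot_apply1 (x : R2) : Jrot x 1 = -(x 0) := rfl

lemma R2_ext {x y : R2} (h0 : x 0 = y 0) (h1 : x 1 = y 1) : x = y := by
  apply PiLp.ext; intro i
  fin_cases i <;> assumption

lemma rotate_zero' (x : R2) : rotate 0 x = x := by
  apply R2_ext <;> simp

lemma rotate_add (θ : ℝ) (x y : R2) : rotate θ (x + y) = rotate θ x + rotate θ y := by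
  apply R2_ext <;> simp [PiLp.add_apply] <;> ring

lemma rotate_smul (θ c : ℝ) (x : R2) : rotate θ (c • x) = c • rotate θ x := by
  apply R2_ext <;> simp [PiLp.smul_apply, smul_eq_mul] <;> ring

lemma rotate_sub (θ : ℝ) (x y : R2) : rotate θ (x - y) = rotate θ x - rotate θ y := by
  apply R2_ext <;> simp [PiLp.sub_apply] <;> ring

lemma rotate_rotate (θ θ' : ℝ) (x : R2) : rotate θ (rotate θ' x) = rotate (θ + θ') x := by
  apply R2_ext <;> simp [Real.cos_add, Real.sin_add] <;> ring

lemma norm_rotate (θ : ℝ) (x : R2) : ‖rotate θ x‖ = ‖x‖ := by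
  rw [EuclideanSpace.norm_eq, EuclideanSpace.norm_eq]
  congr 1
  rw [Fin.sum_univ_two, Fin.sum_univ_two]
  simp only [rotate_apply0, rotate_apply1, Real.norm_eq_abs, sq_abs]
  linear_combination ((x 0) ^ 2 + (x 1) ^ 2) * Real.sin_sq_add_cos_sq θ

/-- rotation as a continuous linear map -/
def rotCLM (θ : ℝ) : R2 →L[ℝ] R2 :=
  LinearMap.toContinuousLinearMap
    { toFun := rotate θ
      map_add' := rotate_add θ
      map_smul' := fun c x => rotate_smul θ c x }

@[simp] lemma rotCLM_apply (θ : ℝ) (x : R2) : rotCLM θ x = rotate θ x := rfl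

variable {m : ℕ}

lemma isOpen_conf : IsOpen {z : Fin m → R2 | ∀ j j', j ≠ j' → z j ≠ z j'} := by
  have h : {z : Fin m → R2 | ∀ j j', j ≠ j' → z j ≠ z j'} =
      ⋂ j, ⋂ j', {z | j ≠ j' → z j ≠ z j'} := by
    ext z; simp [Set.mem_iInter]
  rw [h]
  refine isOpen_iInter_of_finite fun j => isOpen_iInter_of_finite fun j' => ?_
  by_cases hjj : j = j'
  · simp [hjj]
  · have : {z : Fin m → R2 | j ≠ j' → z j ≠ z j'} = {z | z j ≠ z j'} := by
      ext z; simp [hjj]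
    rw [this]
    exact isOpen_ne_fun (continuous_apply j) (continuous_apply j')

lemma contDiffAt_planeHam (Γ : Fin m → ℝ) {z : Fin m → R2}
    (hz : ∀ j j', j ≠ j' → z j ≠ z j') : ContDiffAt ℝ 2 (planeHam Γ) z := by
  unfold planeHam
  refine contDiffAt_const.mul (ContDiffAt.sum fun j _ => ContDiffAt.sum fun j' _ => ?_)
  by_cases hjj : j = j'
  · simp only [hjj, ne_eq, not_true_eq_false, if_false]
    exact contDiffAt_const
  · simp only [ne_eq, hjj, not_false_eq_true, if_true]
    refine contDiffAt_const.mul ?_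
    have h1 : ContDiffAt ℝ 2 (fun w : Fin m → R2 => w j - w j') z :=
      (((ContinuousLinearMap.proj (R := ℝ) (φ := fun _ : Fin m => R2) j).contDiff.sub
        (ContinuousLinearMap.proj j').contDiff)).contDiffAt
    have hne : z j - z j' ≠ 0 := sub_ne_zero.2 (hz j j' hjj)
    have h2 : ContDiffAt ℝ 2 (fun w : Fin m → R2 => ‖w j - w j'‖) z := h1.norm ℝ hne
    exact (Real.contDiffAt_log.2 (norm_ne_zero_iff.2 hne)).comp z h2

lemma fderiv_eq_zero_of_pgrad (f : (Fin m → R2) → ℝ) (α : Fin m → R2)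
    (hd : DifferentiableAt ℝ f α) (hcrit : ∀ k, pgrad f α k = 0) :
    fderiv ℝ f α = 0 := by
  ext w
  have key : ∀ k, fderiv ℝ f α (Pi.single k (w k)) = 0 := by
    intro k
    have hu : HasFDerivAt (Function.update α k)
        (ContinuousLinearMap.pi (Pi.single k (ContinuousLinearMap.id ℝ R2))) (α k) :=
      hasFDerivAt_update α (α k)
    have hcomp : HasFDerivAt (fun p => f (Function.update α k p))
        ((fderiv ℝ f α).comp
          (ContinuousLinearMap.pi (Pi.single k (ContinuousLinearMap.id ℝ R2)))) (α k) := by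
      refine HasFDerivAt.comp (α k) ?_ hu
      rw [Function.update_eq_self]
      exact hd.hasFDerivAt
    have hg := hcrit k
    unfold pgrad gradient at hg
    have hzero : fderiv ℝ (fun p => f (Function.update α k p)) (α k) = 0 := by
      have := congrArg (InnerProductSpace.toDual ℝ R2) hg
      rwa [LinearIsometryEquiv.apply_symm_apply, map_zero] at this
    have hz := hcomp.fderiv
    rw [hzero] at hz
    have happ : fderiv ℝ f α ((ContinuousLinearMap.pi
        (Pi.single k (ContinuousLinearMap.id ℝ R2))) (w k)) = 0 := by
      rw [← ContinuousLinearMap.comp_apply, ← hz]; rfl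
    have hsingle : (ContinuousLinearMap.pi (R := ℝ)
        (Pi.single k (ContinuousLinearMap.id ℝ R2))) (w k)
          = (Pi.single k (w k) : Fin m → R2) := by
      funext j
      by_cases hjk : j = k
      · subst hjk; simp
      · simp [Pi.single, Function.update, hjk]
    rw [← hsingle]
    exact happ
  calc fderiv ℝ f α w = fderiv ℝ f α (∑ k, Pi.single k (w k)) := by
        rw [Finset.univ_sum_single]
    _ = ∑ k, fderiv ℝ f α (Pi.single k (w k)) := map_sum _ _ _
    _ = 0 := by simp [key]

lemma planeHam_orbit (Γ : Fin m → ℝ) (b : R2) {l : ℝ} (hl : 0 < l) (θ : ℝ)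
    {z : Fin m → R2} (hz : ∀ j j', j ≠ j' → z j ≠ z j') :
    planeHam Γ (fun k => b + l • rotate θ (z k)) =
      planeHam Γ z +
        -(1 / (2 * π)) * ∑ j, ∑ j', (if j ≠ j' then Γ j * Γ j' * Real.log l else 0) := by
  unfold planeHam
  have hterm : ∀ j j' : Fin m,
      (if j ≠ j' then Γ j * Γ j' *
          Real.log ‖(b + l • rotate θ (z j)) - (b + l • rotate θ (z j'))‖ else 0) =
        (if j ≠ j' then Γ j * Γ j' * Real.log ‖z j - z j'‖ else 0) +
        (if j ≠ j' then Γ j * Γ j' * Real.log l else 0) := by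
    intro j j'
    by_cases h : j = j'
    · simp [h]
    · simp only [ne_eq, h, not_false_eq_true, if_true]
      have hv : (b + l • rotate θ (z j)) - (b + l • rotate θ (z j')) =
          l • rotate θ (z j - z j') := by
        rw [rotate_sub, smul_sub]; abel
      rw [hv, norm_smul, norm_rotate, Real.norm_eq_abs, abs_of_pos hl,
        Real.log_mul hl.ne' (norm_ne_zero_iff.2 (sub_ne_zero.2 (hz j j' h)))]
      ring
  have hsum : (∑ j, ∑ j', if j ≠ j' then Γ j * Γ j' *
        Real.log ‖(b + l • rotate θ (z j)) - (b + l • rotate θ (z j'))‖ else 0) =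
      (∑ j, ∑ j', if j ≠ j' then Γ j * Γ j' * Real.log ‖z j - z j'‖ else 0) +
      (∑ j, ∑ j', if j ≠ j' then Γ j * Γ j' * Real.log l else 0) := by
    rw [← Finset.sum_add_distrib]
    refine Finset.sum_congr rfl fun j _ => ?_
    rw [← Finset.sum_add_distrib]
    exact Finset.sum_congr rfl fun j' _ => hterm j j'
  rw [hsum]; ring

lemma rotate_injective (θ : ℝ) {x y : R2} (h : rotate θ x = rotate θ y) : x = y := by
  have h2 := congrArg (rotate (-θ)) h
  rwa [rotate_rotate, rotate_rotate, neg_add_cancel, rotate_zero', rotate_zero'] at h2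

lemma fderiv_planeHam_orbit_zero (Γ : Fin m → ℝ) {α : Fin m → R2}
    (hα : ∀ j j', j ≠ j' → α j ≠ α j') (h0 : fderiv ℝ (planeHam Γ) α = 0)
    (b : R2) {l : ℝ} (hl : 0 < l) (θ : ℝ) :
    fderiv ℝ (planeHam Γ) (fun k => b + l • rotate θ (α k)) = 0 := by
  set f := planeHam Γ with hf
  set C : ℝ := -(1 / (2 * π)) *
    ∑ j : Fin m, ∑ j' : Fin m, (if j ≠ j' then Γ j * Γ j' * Real.log l else 0) with hC
  set S : (Fin m → R2) →L[ℝ] (Fin m → R2) :=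
    ContinuousLinearMap.pi (fun k => (l • rotCLM θ).comp (ContinuousLinearMap.proj k)) with hSdef
  have hS : ∀ (z : Fin m → R2) (k : Fin m), S z k = l • rotate θ (z k) := fun z k => rfl
  have hT : HasFDerivAt (fun z : Fin m → R2 => fun k => b + l • rotate θ (z k)) S α := by
    have heq : (fun z : Fin m → R2 => fun k => b + l • rotate θ (z k))
        = fun z => (fun _ => b) + S z := by
      funext z; funext k; simp [hS, Pi.add_apply]
    rw [heq]
    exact (S.hasFDerivAt).const_add _
  have hTα : ∀ j j', j ≠ j' → (b + l • rotate θ (α j)) ≠ (b + l • rotate θ (α j')) := by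
    intro j j' hjj heq
    apply hα j j' hjj
    have h1 : l • rotate θ (α j) = l • rotate θ (α j') := add_left_cancel heq
    exact rotate_injective θ (smul_right_injective R2 hl.ne' h1)
  have hdTα : DifferentiableAt ℝ f (fun k => b + l • rotate θ (α k)) :=
    (contDiffAt_planeHam Γ hTα).differentiableAt two_ne_zero
  have hdα : DifferentiableAt ℝ f α :=
    (contDiffAt_planeHam Γ hα).differentiableAt two_ne_zero
  have hcomp : HasFDerivAt (fun z : Fin m → R2 => f (fun k => b + l • rotate θ (z k)))
      ((fderiv ℝ f (fun k => b + l • rotate θ (α k))).comp S) α :=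
    by have := HasFDerivAt.comp α hdTα.hasFDerivAt hT; exact this
  have hUα : {z : Fin m → R2 | ∀ j j', j ≠ j' → z j ≠ z j'} ∈ nhds α :=
    isOpen_conf.mem_nhds hα
  have hev : (fun z : Fin m → R2 => f (fun k => b + l • rotate θ (z k)))
      =ᶠ[nhds α] (fun z => f z + C) :=
    Filter.eventuallyEq_of_mem hUα (fun z hz => planeHam_orbit Γ b hl θ hz)
  have hcomp' : HasFDerivAt (fun z : Fin m → R2 => f z + C)
      ((fderiv ℝ f (fun k => b + l • rotate θ (α k))).comp S) α :=
    hcomp.congr_of_eventuallyEq hev.symm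
  have halt : HasFDerivAt (fun z : Fin m → R2 => f z + C) (fderiv ℝ f α) α :=
    hdα.hasFDerivAt.add_const C
  have huniq : (fderiv ℝ f (fun k => b + l • rotate θ (α k))).comp S = fderiv ℝ f α :=
    hcomp'.unique halt
  rw [h0] at huniq
  ext w
  have hsurj : S (fun k => l⁻¹ • rotate (-θ) (w k)) = w := by
    funext k
    rw [hS]
    rw [rotate_smul, smul_smul, mul_inv_cancel₀ hl.ne', one_smul, rotate_rotate,
      add_neg_cancel, rotate_zero']
  calc fderiv ℝ f (fun k => b + l • rotate θ (α k)) w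
      = ((fderiv ℝ f (fun k => b + l • rotate θ (α k))).comp S)
          (fun k => l⁻¹ • rotate (-θ) (w k)) := by
        rw [ContinuousLinearMap.comp_apply, hsurj]
    _ = 0 := by rw [huniq]; rfl

lemma hasDerivAt_rotate (s : ℝ) (x : R2) :
    HasDerivAt (fun ε => rotate (s * ε) x) (s • Jrot x) 0 := by
  have hse : HasDerivAt (fun ε : ℝ => s * ε) s 0 := by
    simpa using (hasDerivAt_id (0 : ℝ)).const_mul s
  have hcos := hse.cos
  have hsin := hse.sin
  have h0 : HasDerivAt (fun ε => Real.cos (s * ε) * x 0 + Real.sin (s * ε) * x 1)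
      (s * x 1) 0 := by
    have := (hcos.mul_const (x 0)).add (hsin.mul_const (x 1))
    exact this.congr_deriv (by simp)
  have h1 : HasDerivAt (fun ε => -Real.sin (s * ε) * x 0 + Real.cos (s * ε) * x 1)
      (-(s * x 0)) 0 := by
    have := ((hsin.neg).mul_const (x 0)).add (hcos.mul_const (x 1))
    exact this.congr_deriv (by simp [neg_mul])
  have hpi : HasDerivAt (fun ε => (![Real.cos (s * ε) * x 0 + Real.sin (s * ε) * x 1,
      -Real.sin (s * ε) * x 0 + Real.cos (s * ε) * x 1] : Fin 2 → ℝ))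
      ![s * x 1, -(s * x 0)] 0 := by
    rw [hasDerivAt_pi]
    intro i
    fin_cases i
    · simpa using h0
    · simpa using h1
  have hL := (((PiLp.continuousLinearEquiv 2 ℝ (fun _ : Fin 2 => ℝ)).symm :
      (Fin 2 → ℝ) →L[ℝ] R2).hasFDerivAt).comp_hasDerivAt (0 : ℝ) hpi
  have hval : ((PiLp.continuousLinearEquiv 2 ℝ (fun _ : Fin 2 => ℝ)).symm :
      (Fin 2 → ℝ) →L[ℝ] R2) ![s * x 1, -(s * x 0)] = s • Jrot x := by
    apply R2_ext <;> simp [Jrot, PiLp.smul_apply, smul_eq_mul]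
  rw [hval] at hL
  exact hL

lemma hasDerivAt_curve (a x : R2) (s t : ℝ) :
    HasDerivAt (fun ε : ℝ => ε • a + (1 + t * ε) • rotate (s * ε) x)
      (a + s • Jrot x + t • x) 0 := by
  have h1 : HasDerivAt (fun ε : ℝ => ε • a) a 0 := by
    simpa using (hasDerivAt_id (0 : ℝ)).smul_const a
  have h2 : HasDerivAt (fun ε : ℝ => 1 + t * ε) t 0 := by
    simpa using ((hasDerivAt_id (0 : ℝ)).const_mul t).const_add 1
  have h3 := h2.smul (hasDerivAt_rotate s x)
  have h := h1.add h3
  refine h.congr_deriv ?_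
  simp [rotate_zero', add_assoc]

end Statement14Aux

/-- the kernel of `∇²𝓗_{ℝ²}(α)` contains translations, the rotation
direction `J_mα` and the scaling direction `α`. -/
theorem statement14
    (m : ℕ) (Γ : Fin m → ℝ) (hΓ : ∀ k, Γ k ≠ 0)
    (α : Fin m → R2) (hα : ∀ k k', k ≠ k' → α k ≠ α k')
    (hcrit : ∀ k, pgrad (planeHam Γ) α k = 0) :
    ∀ (a : R2) (s t : ℝ),
      (fun k => a + s • Jrot (α k) + t • α k) ∈ hessKer (planeHam Γ) α := by
  intro a s t
  set f := planeHam Γ with hf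
  have hdα : DifferentiableAt ℝ f α :=
    (contDiffAt_planeHam Γ hα).differentiableAt two_ne_zero
  have h0 : fderiv ℝ f α = 0 := fderiv_eq_zero_of_pgrad f α hdα hcrit
  have hdf : DifferentiableAt ℝ (fderiv ℝ f) α :=
    ((contDiffAt_planeHam Γ hα).fderiv_right (m := 1) (le_refl 2)).differentiableAt one_ne_zero
  set L := fderiv ℝ (fderiv ℝ f) α with hL
  set c : ℝ → Fin m → R2 :=
    fun ε => fun k => ε • a + (1 + t * ε) • rotate (s * ε) (α k) with hc
  have hc0 : c 0 = α := by
    funext k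
    simp [hc, rotate_zero']
  set v : Fin m → R2 := fun k => a + s • Jrot (α k) + t • α k with hv
  have hcv : HasDerivAt c v 0 := by
    rw [hasDerivAt_pi]
    intro k
    exact hasDerivAt_curve a (α k) s t
  have hder1 : HasDerivAt (fun ε => fderiv ℝ f (c ε)) (L v) 0 := by
    refine HasFDerivAt.comp_hasDerivAt 0 ?_ hcv
    rw [hc0]
    exact hdf.hasFDerivAt
  have hzero : (fun ε => fderiv ℝ f (c ε)) =ᶠ[nhds 0]
      (fun _ => (0 : (Fin m → R2) →L[ℝ] ℝ)) := by
    have hopen : IsOpen {ε : ℝ | 0 < 1 + t * ε} :=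
      isOpen_lt continuous_const (by continuity)
    have hmem : {ε : ℝ | 0 < 1 + t * ε} ∈ nhds (0 : ℝ) := by
      apply hopen.mem_nhds
      simp
    filter_upwards [hmem] with ε hε
    exact fderiv_planeHam_orbit_zero Γ hα h0 (ε • a) hε (s * ε)
  have hder2 : HasDerivAt (fun ε => fderiv ℝ f (c ε))
      (0 : (Fin m → R2) →L[ℝ] ℝ) 0 :=
    (hasDerivAt_const (0 : ℝ) (0 : (Fin m → R2) →L[ℝ] ℝ)).congr_of_eventuallyEq hzero
  have hLv : L v = 0 := hder1.unique hder2
  show (fun k => a + s • Jrot (α k) + t • α k) ∈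
    LinearMap.ker (fderiv ℝ (fderiv ℝ f) α : (Fin m → R2) →ₗ[ℝ] (Fin m → R2) →L[ℝ] ℝ)
  rw [LinearMap.mem_ker]
  exact hLv
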